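/- Let s₂ > 1 be real, let c > 0 be real, and let η be a real number with 0 ≤ η < 1 and η ≥ (3 − s₂)/(s₂ + 1). Then for every complex number s with |s| < 1, Re( c·(s − 1)(s − s₂)/(1 − η s) ) > 0. -/

import Mathlib

theorem multiplier_positivity_on_unit_disk (s₂ c η : ℝ) (hs₂ : 1 < s₂) (hc : 0 < c)
    (hη0 : 0 ≤ η) (hη1 : η < 1) (hη : η ≥ (3 - s₂) / (s₂ + 1)) :
    ∀ s : ℂ, ‖s‖ < 1 →
      ((c : ℂ) * (s - 1) * (s - (s₂ : ℂ)) / (1 - (η : ℂ) * s)).re > 0 := by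
  intro s hs
  set x := s.re with hxdef
  set y := s.im with hydef
  have hxy : x ^ 2 + y ^ 2 < 1 := by
    have h1 : ‖s‖ ^ 2 = x ^ 2 + y ^ 2 := by
      rw [Complex.sq_norm, Complex.normSq_apply]; ring
    nlinarith [norm_nonneg s]
  have hx1 : x < 1 := by nlinarith [sq_nonneg y, sq_nonneg (x - 1)]
  have hx1' : -1 < x := by nlinarith [sq_nonneg y, sq_nonneg (x + 1)]
  have hηx : η * x < 1 := by nlinarith
  have hη' : η * (s₂ + 1) ≥ 3 - s₂ := by
    have := (div_le_iff₀ (by linarith : (0:ℝ) < s₂ + 1)).mp hη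
    linarith
  -- key real inequality
  have hA : 0 < (1 - x) * ((1 - η * x) * (s₂ - x)) := by
    apply mul_pos (by linarith)
    exact mul_pos (by linarith) (by linarith)
  have hB : 0 < (1 - x) * ((s₂ - 1 + η * (s₂ + 1)) - 2 * x) := by
    apply mul_pos (by linarith); linarith
  have key : 0 < 2 * x ^ 2 - (x ^ 2 + y ^ 2) - (1 + s₂) * x + s₂ - η * x * (x ^ 2 + y ^ 2)
      + η * (1 + s₂) * (x ^ 2 + y ^ 2) - η * s₂ * x := by
    nlinarith [mul_pos (by nlinarith : (0:ℝ) < 1 - (x ^ 2 + y ^ 2)) hA,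
      mul_nonneg (sq_nonneg y) hB.le, sq_nonneg y, sq_nonneg (1 - x)]
  have hD : 0 < Complex.normSq (1 - (η : ℂ) * s) := by
    have : Complex.normSq (1 - (η : ℂ) * s) = (1 - η * x) ^ 2 + (η * y) ^ 2 := by
      simp [Complex.normSq_apply, Complex.mul_re, Complex.mul_im]; ring
    rw [this]
    nlinarith [sq_nonneg (η * y), sq_nonneg (1 - η * x)]
  rw [Complex.div_re, ← add_div]
  apply div_pos _ hD
  have hre : ((c : ℂ) * (s - 1) * (s - (s₂ : ℂ))).re * (1 - (η : ℂ) * s).re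
      + ((c : ℂ) * (s - 1) * (s - (s₂ : ℂ))).im * (1 - (η : ℂ) * s).im
      = c * (2 * x ^ 2 - (x ^ 2 + y ^ 2) - (1 + s₂) * x + s₂ - η * x * (x ^ 2 + y ^ 2)
        + η * (1 + s₂) * (x ^ 2 + y ^ 2) - η * s₂ * x) := by
    simp [Complex.mul_re, Complex.mul_im]
    ring
  rw [hre]
  exact mul_pos hc key
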